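/- Consider the storage scheduling LP with η = η^C·η^D < 1. If an optimal solution exhibits simultaneous charge and discharge at time period t (p_t^C > 0 and p_t^D > 0), then C_t ≤ 0. In other words, simultaneous charge and discharge can only be optimal at times with nonpositive prices. -/

import Mathlib

open Finset

def feasible (T : ℕ) (Δt ρ ηC ηD Slb Sub Sinit PC PD : ℝ)
    (s pC pD : ℕ → ℝ) : Prop :=
  s 0 = Sinit ∧
  (∀ t ∈ Icc 1 T, s t = ρ * s (t - 1) + Δt * (ηC * pC t - (1 / ηD) * pD t)) ∧
  (∀ t ∈ Icc 1 T, Slb ≤ s t ∧ s t ≤ Sub) ∧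
  (∀ t ∈ Icc 1 T, 0 ≤ pC t ∧ pC t ≤ PC) ∧
  (∀ t ∈ Icc 1 T, 0 ≤ pD t ∧ pD t ≤ PD)

def objective (T : ℕ) (Δt : ℝ) (C : ℕ → ℝ) (pC pD : ℕ → ℝ) : ℝ :=
  ∑ t ∈ Icc 1 T, Δt * C t * (pD t - pC t)

def optimal (T : ℕ) (Δt ρ ηC ηD Slb Sub Sinit PC PD : ℝ) (C : ℕ → ℝ)
    (s pC pD : ℕ → ℝ) : Prop :=
  feasible T Δt ρ ηC ηD Slb Sub Sinit PC PD s pC pD ∧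
  ∀ s' pC' pD', feasible T Δt ρ ηC ηD Slb Sub Sinit PC PD s' pC' pD' →
    objective T Δt C pC' pD' ≤ objective T Δt C pC pD

theorem stmt3 (T : ℕ) (Δt ρ ηC ηD Slb Sub Sinit PC PD : ℝ) (C : ℕ → ℝ)
    (hΔt : 0 < Δt) (hρ0 : 0 < ρ) (hρ1 : ρ ≤ 1)
    (hηC0 : 0 < ηC) (hηC1 : ηC ≤ 1) (hηD0 : 0 < ηD) (hηD1 : ηD ≤ 1)
    (hη : ηC * ηD < 1)
    (hS0 : 0 ≤ Slb) (hS : Slb < Sub) (hPC : 0 < PC) (hPD : 0 < PD)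
    (s pC pD : ℕ → ℝ)
    (hopt : optimal T Δt ρ ηC ηD Slb Sub Sinit PC PD C s pC pD)
    (t : ℕ) (ht : t ∈ Icc 1 T) (hCch : 0 < pC t) (hDch : 0 < pD t) :
    C t ≤ 0 := by
  set η := ηC * ηD with hηdef
  have hη0 : 0 < η := mul_pos hηC0 hηD0
  set ε := min (pC t) (pD t) with hεdef
  have hε0 : 0 < ε := lt_min hCch hDch
  have hεC : ε ≤ pC t := min_le_left _ _
  have hεD : ε ≤ pD t := min_le_right _ _
  set pC' : ℕ → ℝ := fun u => if u = t then pC t - ε else pC u with hpC'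
  set pD' : ℕ → ℝ := fun u => if u = t then pD t - η * ε else pD u with hpD'
  obtain ⟨hfeas, hmax⟩ := hopt
  obtain ⟨h0, hdyn, hsbd, hpCbd, hpDbd⟩ := hfeas
  have hfeas' : feasible T Δt ρ ηC ηD Slb Sub Sinit PC PD s pC' pD' := by
    refine ⟨h0, ?_, hsbd, ?_, ?_⟩
    · intro u hu
      by_cases h : u = t
      · subst h
        have := hdyn u hu
        simp only [hpC', hpD', if_pos rfl]
        rw [this]
        have hD : ηD ≠ 0 := ne_of_gt hηD0
        field_simp
        ring_nf
        rw [hηdef]; ring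
      · simpa [hpC', hpD', h] using hdyn u hu
    · intro u hu
      by_cases h : u = t
      · subst h
        simp only [hpC', if_pos rfl]
        have := (hpCbd u hu).2
        constructor <;> linarith [hε0]
      · simpa [hpC', h] using hpCbd u hu
    · intro u hu
      by_cases h : u = t
      · subst h
        have hηε : η * ε ≤ ε := by nlinarith
        refine ⟨?_, ?_⟩
        · simp only [hpD', if_pos rfl]; linarith
        · simp only [hpD', if_pos rfl]
          have := (hpDbd u hu).2
          nlinarith
      · simpa [hpD', h] using hpDbd u hu
  have key := hmax s pC' pD' hfeas'
  unfold objective at key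
  have hsum : ∀ u ∈ Icc 1 T,
      Δt * C u * (pD' u - pC' u)
        = Δt * C u * (pD u - pC u) + (if u = t then Δt * C t * ((1 - η) * ε) else 0) := by
    intro u _
    by_cases h : u = t
    · subst h; simp only [hpD', hpC', if_pos rfl, if_true, eq_self_iff_true]; ring
    · simp [hpD', hpC', h]
  rw [Finset.sum_congr rfl hsum, Finset.sum_add_distrib, Finset.sum_ite_eq' _ t] at key
  rw [if_pos ht] at key
  have h1η : 0 < 1 - η := by linarith
  nlinarith [mul_pos (mul_pos hΔt h1η) hε0]
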